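/- Let x ∈ X with T^{-1}(x) ∉ A and κ(x) ≥ 5 and such that T^n(x) is never the all-zero sequence. Then for every k ≥ 5, liminf_{N→∞} (1/N) Σ_{i=0}^{N-1} 1_{E_k}(T^i(x)) ≤ (k+2)/2^k, where E_k = ⋃_{i=k+1}^{∞} ⋃_{j=0}^{i-1} T^j([0^i]). -/

import Mathlib

open MeasureTheory Filter Topology
open scoped ENNReal

/-- The odometer map on `X = {0,1}^ℕ` (adding one with carry in binary). -/
def Tod (x : ℕ → Bool) : ℕ → Bool := fun k =>
  if ∀ i < k, x i = true then !(x k) else x k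

/-- The inverse of the odometer map (subtracting one with borrow). -/
def TodInv (x : ℕ → Bool) : ℕ → Bool := fun k =>
  if ∀ i < k, x i = false then !(x k) else x k

/-- The number determined by the first `k` binary digits of `x`. -/
def DN (k : ℕ) (x : ℕ → Bool) : ℕ := ∑ i ∈ Finset.range k, 2 ^ i * (x i).toNat

/-- The cylinder `[0^i]` of sequences starting with `i` zeros. -/
def cyl0 (i : ℕ) : Set (ℕ → Bool) := {x | ∀ j < i, x j = false}

/-- `A = ⋃_{i=5}^∞ ⋃_{j=0}^{i-1} T^j([0^i])`. -/
def Aset : Set (ℕ → Bool) := ⋃ (i : ℕ) (_ : 5 ≤ i) (j : ℕ) (_ : j < i), Tod^[j] '' cyl0 i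

/-- `A_k = ⋃_{i=5}^{k} ⋃_{j=0}^{i-1} T^j([0^i])`. -/
def Ak (k : ℕ) : Set (ℕ → Bool) :=
  ⋃ (i : ℕ) (_ : 5 ≤ i) (_ : i ≤ k) (j : ℕ) (_ : j < i), Tod^[j] '' cyl0 i

/-- `E_k = ⋃_{i=k+1}^∞ ⋃_{j=0}^{i-1} T^j([0^i])`. -/
def Ek (k : ℕ) : Set (ℕ → Bool) :=
  ⋃ (i : ℕ) (_ : k + 1 ≤ i) (j : ℕ) (_ : j < i), Tod^[j] '' cyl0 i


lemma sum_two_pow (i : ℕ) : ∑ m ∈ Finset.range i, 2 ^ m = 2 ^ i - 1 := by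
  induction i with
  | zero => simp
  | succ n ih =>
    rw [Finset.sum_range_succ, ih, pow_succ]
    have : 0 < 2 ^ n := pow_pos (by norm_num) n
    omega

lemma DN_succ (i : ℕ) (y : ℕ → Bool) : DN (i + 1) y = DN i y + 2 ^ i * (y i).toNat := by
  simp [DN, Finset.sum_range_succ]

lemma DN_lt (i : ℕ) (y : ℕ → Bool) : DN i y < 2 ^ i := by
  have : DN i y ≤ ∑ m ∈ Finset.range i, 2 ^ m := by
    apply Finset.sum_le_sum
    intro m _
    cases y m <;> simp
  have h2 := sum_two_pow i
  have : 0 < 2 ^ i := pow_pos (by norm_num) i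
  omega

lemma DN_all_true (i : ℕ) (y : ℕ → Bool) (h : ∀ j < i, y j = true) :
    DN i y = 2 ^ i - 1 := by
  rw [DN, ← sum_two_pow i]
  apply Finset.sum_congr rfl
  intro m hm
  rw [h m (Finset.mem_range.mp hm)]
  simp

lemma DN_add_false (i j : ℕ) (y : ℕ → Bool) (hj : j < i) (hf : y j = false) :
    DN i y + 2 ^ j < 2 ^ i := by
  have hmem : j ∈ Finset.range i := Finset.mem_range.mpr hj
  have h1 : DN i y = ∑ m ∈ (Finset.range i).erase j, 2 ^ m * (y m).toNat := by
    rw [DN, ← Finset.add_sum_erase _ _ hmem, hf]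
    simp
  have h2 : ∑ m ∈ (Finset.range i).erase j, 2 ^ m * (y m).toNat
      ≤ ∑ m ∈ (Finset.range i).erase j, 2 ^ m := by
    apply Finset.sum_le_sum; intro m _; cases y m <;> simp
  have h3 : ∑ m ∈ (Finset.range i).erase j, 2 ^ m + 2 ^ j = ∑ m ∈ Finset.range i, 2 ^ m := by
    rw [← Finset.add_sum_erase _ _ hmem]; omega
  have h4 := sum_two_pow i
  have : 0 < 2 ^ i := pow_pos (by norm_num) i
  omega

lemma DN_Tod (i : ℕ) (y : ℕ → Bool) : DN i (Tod y) = (DN i y + 1) % 2 ^ i := by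
  induction i with
  | zero => simp [DN]
  | succ n ih =>
    rw [DN_succ, DN_succ, ih]
    by_cases h : ∀ j < n, y j = true
    · have hall : DN n y = 2 ^ n - 1 := DN_all_true n y h
      have hpos : 0 < 2 ^ n := pow_pos (by norm_num) n
      have h0 : (DN n y + 1) % 2 ^ n = 0 := by
        rw [hall]; rw [Nat.sub_add_cancel hpos, Nat.mod_self]
      have hT : Tod y n = !(y n) := by simp only [Tod]; rw [if_pos h]
      rw [h0, hT, hall]
      cases hyn : y n
      · simp only [Bool.not_false, Bool.toNat_true, Bool.toNat_false, mul_zero, mul_one,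
          add_zero, h0, hall]
        rw [Nat.sub_add_cancel hpos, pow_succ, Nat.mod_eq_of_lt (by omega)]
        omega
      · simp only [Bool.not_true, Bool.toNat_true, Bool.toNat_false, mul_zero, mul_one,
          add_zero, h0, hall]
        have he : 2 ^ n - 1 + 2 ^ n + 1 = 2 ^ (n + 1) := by rw [pow_succ]; omega
        rw [he, Nat.mod_self]
    · push_neg at h
      obtain ⟨j, hj, hf⟩ := h
      have hf' : y j = false := by cases hyj : y j; rfl; exact absurd hyj hf
      have hlt : DN n y + 1 < 2 ^ n := by
        have := DN_add_false n j y hj hf'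
        have : 0 < 2 ^ j := pow_pos (by norm_num) j
        have h2 := DN_add_false n j y hj hf'
        omega
      have h0 : (DN n y + 1) % 2 ^ n = DN n y + 1 := Nat.mod_eq_of_lt hlt
      have hT : Tod y n = y n := by
        simp only [Tod]
        rw [if_neg]
        push_neg
        exact ⟨j, hj, by simp [hf']⟩
      have hlt2 : DN n y + 2 ^ n * (y n).toNat + 1 < 2 ^ (n + 1) := by
        have : (y n).toNat ≤ 1 := by cases y n <;> simp
        rw [pow_succ]
        nlinarith
      rw [h0, hT, Nat.mod_eq_of_lt hlt2]
      ring

lemma DN_iterate (i n : ℕ) (y : ℕ → Bool) :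
    DN i (Tod^[n] y) = (DN i y + n) % 2 ^ i := by
  induction n with
  | zero => simp [Nat.mod_eq_of_lt (DN_lt i y)]
  | succ m ih =>
    rw [Function.iterate_succ_apply', DN_Tod, ih, Nat.mod_add_mod, ← Nat.add_assoc]

lemma DN_Ico (i r : ℕ) (h : i ≤ r) (y : ℕ → Bool) :
    DN r y = DN i y + ∑ m ∈ Finset.Ico i r, 2 ^ m * (y m).toNat := by
  rw [DN, DN, ← Finset.sum_range_add_sum_Ico _ h]

lemma DN_mod (i r : ℕ) (h : i ≤ r) (y : ℕ → Bool) :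
    DN i y = DN r y % 2 ^ i := by
  rw [DN_Ico i r h]
  have hdvd : 2 ^ i ∣ ∑ m ∈ Finset.Ico i r, 2 ^ m * (y m).toNat := by
    apply Finset.dvd_sum
    intro m hm
    exact Dvd.dvd.mul_right (pow_dvd_pow 2 (Finset.mem_Ico.mp hm).1) _
  have hz : (∑ m ∈ Finset.Ico i r, 2 ^ m * (y m).toNat) % 2 ^ i = 0 :=
    Nat.mod_eq_zero_of_dvd hdvd
  rw [Nat.add_mod, hz, add_zero, Nat.mod_mod_of_dvd _ dvd_rfl,
    Nat.mod_eq_of_lt (DN_lt i y)]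

lemma DN_ext (a b : ℕ → Bool) (h : ∀ r, DN r a = DN r b) : a = b := by
  funext m
  have h1 := h (m + 1)
  have h2 := h m
  rw [DN_succ, DN_succ, h2] at h1
  have : (a m).toNat = (b m).toNat := by
    have h3 : 2 ^ m * (a m).toNat = 2 ^ m * (b m).toNat := by omega
    exact Nat.eq_of_mul_eq_mul_left (pow_pos (by norm_num) m) h3
  cases ha : a m <;> cases hb : b m <;> simp [ha, hb] at this ⊢

lemma DN_eq_zero_iff (i : ℕ) (y : ℕ → Bool) : DN i y = 0 ↔ ∀ j < i, y j = false := by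
  constructor
  · intro h j hj
    rw [DN, Finset.sum_eq_zero_iff] at h
    have := h j (Finset.mem_range.mpr hj)
    cases hy : y j
    · rfl
    · rw [hy] at this; simp at this
  · intro h
    rw [DN, Finset.sum_eq_zero]
    intro j hj
    rw [h j (Finset.mem_range.mp hj)]
    simp

lemma image_cyl (i j : ℕ) (hj : j < 2 ^ i) :
    Tod^[j] '' cyl0 i = {y | DN i y = j} := by
  ext y
  constructor
  · rintro ⟨z, hz, rfl⟩
    have hz0 : DN i z = 0 := (DN_eq_zero_iff i z).mpr hz
    simp [Set.mem_setOf_eq, DN_iterate, hz0, Nat.mod_eq_of_lt hj]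
  · intro hy
    simp only [Set.mem_setOf_eq] at hy
    set z : ℕ → Bool := fun m => if m < i then false else y m with hzdef
    refine ⟨z, fun m hm => by simp [hzdef, hm], ?_⟩
    apply DN_ext
    intro r
    rw [DN_iterate]
    rcases le_or_gt r i with hr | hr
    · have hz0 : DN r z = 0 := by
        rw [DN_eq_zero_iff]
        intro m hm
        simp [hzdef, lt_of_lt_of_le hm hr]
      rw [hz0, zero_add, DN_mod r i hr, hy]
    · have hzr : DN r z = DN r y - j := by
        rw [DN_Ico i r hr.le, DN_Ico i r hr.le y, hy]
        have hz0 : DN i z = 0 := by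
          rw [DN_eq_zero_iff]; intro m hm; simp [hzdef, hm]
        rw [hz0, zero_add]
        have : ∑ m ∈ Finset.Ico i r, 2 ^ m * (z m).toNat
            = ∑ m ∈ Finset.Ico i r, 2 ^ m * (y m).toNat := by
          apply Finset.sum_congr rfl
          intro m hm
          have : ¬ m < i := not_lt.mpr (Finset.mem_Ico.mp hm).1
          simp [hzdef, this]
        omega
      have hjy : j ≤ DN r y := by
        rw [DN_Ico i r hr.le y, hy]; omega
      rw [hzr, Nat.sub_add_cancel hjy, Nat.mod_eq_of_lt (DN_lt r y)]

lemma mem_Ek_iff (k : ℕ) (y : ℕ → Bool) :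
    y ∈ Ek k ↔ ∃ i, k + 1 ≤ i ∧ DN i y < i := by
  simp only [Ek, Set.mem_iUnion]
  constructor
  · rintro ⟨i, hi, j, hji, hy⟩
    refine ⟨i, hi, ?_⟩
    rw [image_cyl i j (lt_trans hji (Nat.lt_two_pow_self (n := i)))] at hy
    exact hy ▸ hji
  · rintro ⟨i, hi, hlt⟩
    exact ⟨i, hi, DN i y, hlt, by
      rw [image_cyl i _ (lt_trans hlt (Nat.lt_two_pow_self (n := i)))]; exact rfl⟩

lemma mem_Aset_iff (y : ℕ → Bool) :
    y ∈ Aset ↔ ∃ i, 5 ≤ i ∧ DN i y < i := by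
  have : Aset = Ek 4 := rfl
  rw [this, mem_Ek_iff]

lemma todInv_aux (x : ℕ → Bool) (k : ℕ) :
    (∀ i < k, TodInv x i = true) ↔ (∀ i < k, x i = false) := by
  constructor
  · intro h i hi
    induction i using Nat.strong_induction_on with
    | _ i ih =>
      have hprev : ∀ j < i, x j = false := fun j hj => ih j hj (lt_trans hj hi)
      have := h i hi
      rw [TodInv, if_pos hprev] at this
      cases hx : x i
      · rfl
      · rw [hx] at this; simp at this
  · intro h i hi
    have hprev : ∀ j < i, x j = false := fun j hj => h j (lt_trans hj hi)
    rw [TodInv, if_pos hprev, h i hi]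
    rfl

lemma tod_todInv (x : ℕ → Bool) : Tod (TodInv x) = x := by
  funext k
  rw [Tod]
  by_cases h : ∀ i < k, TodInv x i = true
  · have hx := (todInv_aux x k).mp h
    rw [if_pos h, TodInv, if_pos hx]
    simp
  · have hx : ¬ ∀ i < k, x i = false := fun hc => h ((todInv_aux x k).mpr hc)
    rw [if_neg h, TodInv, if_neg hx]

-- Key consequence of hpre
lemma key (x : ℕ → Bool) (hpre : ∀ y, Tod y = x → y ∉ Aset)
    (i : ℕ) (hi : 5 ≤ i) (hc : 1 ≤ DN i x) : i + 1 ≤ DN i x := by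
  have hA := hpre (TodInv x) (tod_todInv x)
  rw [mem_Aset_iff] at hA
  push_neg at hA
  have hAi := hA i hi
  have hTod := DN_Tod i (TodInv x)
  rw [tod_todInv] at hTod
  have hlt := DN_lt i (TodInv x)
  -- DN i x = (d + 1) % 2^i with d < 2^i, DN i x ≥ 1 so d + 1 < 2^i hence d = DN i x - 1
  rcases Nat.lt_or_ge (DN i (TodInv x) + 1) (2 ^ i) with h | h
  · rw [Nat.mod_eq_of_lt h] at hTod
    omega
  · have : DN i (TodInv x) + 1 = 2 ^ i := by omega
    rw [this, Nat.mod_self] at hTod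
    omega

-- infinitely many false digits
lemma exists_false_digit (x : ℕ → Bool) (hnz : ∀ m, Tod^[m] x ≠ fun _ => false) :
    ∀ M, ∃ L, M ≤ L ∧ x L = false := by
  intro M
  by_contra hcon
  push_neg at hcon
  have htrue : ∀ L, M ≤ L → x L = true := by
    intro L hL
    cases hx : x L
    · exact absurd hx (hcon L hL)
    · rfl
  set m := 2 ^ M - DN M x with hm
  apply hnz m
  have hzero : ∀ r, DN r (fun _ => false) = 0 := by
    intro r; rw [DN_eq_zero_iff]; exact fun _ _ => rfl
  have hM : DN M x + m = 2 ^ M := by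
    have := DN_lt M x
    omega
  apply DN_ext
  intro r
  rw [DN_iterate, hzero]
  rcases le_or_gt M r with hMr | hMr
  · have : DN r x + m = 2 ^ r := by
      rw [DN_Ico M r hMr]
      have h1 : ∑ j ∈ Finset.Ico M r, 2 ^ j * (x j).toNat = 2 ^ r - 2 ^ M := by
        have : ∀ j ∈ Finset.Ico M r, 2 ^ j * (x j).toNat = 2 ^ j := by
          intro j hj
          rw [htrue j (Finset.mem_Ico.mp hj).1]; simp
        rw [Finset.sum_congr rfl this]
        show ∑ j ∈ Finset.Ico M r, (2:ℕ) ^ j = 2 ^ r - 2 ^ M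
        have h2 : ∑ j ∈ Finset.range M, (2:ℕ) ^ j + ∑ j ∈ Finset.Ico M r, 2 ^ j
            = ∑ j ∈ Finset.range r, 2 ^ j := Finset.sum_range_add_sum_Ico _ hMr
        have h3 := sum_two_pow M
        have h4 := sum_two_pow r
        have h5 : (2:ℕ) ^ M ≤ 2 ^ r := Nat.pow_le_pow_right (by norm_num) hMr
        have h6 : (0:ℕ) < 2 ^ M := pow_pos (by norm_num) M
        omega
      have h7 := DN_lt M x
      have h8 : (2:ℕ) ^ M ≤ 2 ^ r := Nat.pow_le_pow_right (by norm_num) hMr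
      omega
    rw [this, Nat.mod_self]
  · rw [DN_mod r M hMr.le, Nat.mod_add_mod, hM]
    apply Nat.mod_eq_zero_of_dvd
    exact pow_dvd_pow 2 hMr.le

lemma count_block (c i : ℕ) :
    ((Finset.range (2 ^ i)).filter (fun s => (c + s) % 2 ^ i < i)).card ≤ i := by
  have : ((Finset.range (2 ^ i)).filter (fun s => (c + s) % 2 ^ i < i)).card
      ≤ (Finset.range i).card := by
    apply Finset.card_le_card_of_injOn (fun s => (c + s) % 2 ^ i)
    · intro s hs
      simp only [Finset.coe_filter, Finset.mem_filter, Set.mem_setOf_eq] at hs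
      exact Finset.mem_range.mpr hs.2
    · intro s hs t ht hst
      simp only [Finset.coe_filter, Set.mem_setOf_eq, Finset.mem_range] at hs ht
      have : s % 2 ^ i = t % 2 ^ i := Nat.ModEq.add_left_cancel' c hst
      rwa [Nat.mod_eq_of_lt hs.1, Nat.mod_eq_of_lt ht.1] at this
  simpa using this

lemma count_le (c i : ℕ) : ∀ M : ℕ,
    ((Finset.range (2 ^ i * M)).filter (fun n => (c + n) % 2 ^ i < i)).card ≤ M * i := by
  intro M
  induction M with
  | zero => simp
  | succ M ih =>
    have hsplit : Finset.range (2 ^ i * (M + 1)) =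
        Finset.range (2 ^ i * M) ∪ (Finset.range (2 ^ i)).map (addLeftEmbedding (2 ^ i * M)) := by
      rw [Nat.mul_succ, Finset.range_add]
    rw [hsplit, Finset.filter_union]
    have hcard2 : ((Finset.range (2 ^ i)).map (addLeftEmbedding (2 ^ i * M))
        |>.filter (fun n => (c + n) % 2 ^ i < i)).card ≤ i := by
      rw [Finset.filter_map, Finset.card_map]
      calc ((Finset.range (2 ^ i)).filter ((fun n => (c + n) % 2 ^ i < i) ∘ (addLeftEmbedding (2 ^ i * M)))).card
          = ((Finset.range (2 ^ i)).filter (fun s => (c + s) % 2 ^ i < i)).card := by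
            apply congrArg
            apply Finset.filter_congr
            intro s _
            simp only [Function.comp_apply, addLeftEmbedding_apply]
            have hmod : (c + (2 ^ i * M + s)) % 2 ^ i = (c + s) % 2 ^ i := by
              rw [← Nat.add_assoc, Nat.add_comm c (2 ^ i * M), Nat.add_assoc, Nat.mul_comm,
                Nat.add_comm (M * 2 ^ i) (c + s), Nat.add_mul_mod_self_right]
            rw [hmod]
        _ ≤ i := count_block c i
    calc _ ≤ _ := Finset.card_union_le _ _
      _ ≤ M * i + i := Nat.add_le_add ih hcard2
      _ = (M + 1) * i := by ring

lemma sum_bound (k : ℕ) : ∀ L, k ≤ L →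
    (∑ i ∈ Finset.Icc (k + 1) L, 2 ^ (L - i) * i) + (L + 2) = (k + 2) * 2 ^ (L - k) := by
  intro L
  induction L with
  | zero => intro h; interval_cases k; simp
  | succ L ih =>
    intro hkL
    rcases Nat.lt_or_ge L k with h | h
    · have : k = L + 1 := by omega
      subst this
      simp
    · have htop := Finset.sum_Icc_succ_top (by omega : k + 1 ≤ L + 1)
        (fun i => 2 ^ (L + 1 - i) * i)
      have hdouble : ∑ i ∈ Finset.Icc (k + 1) L, 2 ^ (L + 1 - i) * i
          = 2 * ∑ i ∈ Finset.Icc (k + 1) L, 2 ^ (L - i) * i := by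
        rw [Finset.mul_sum]
        apply Finset.sum_congr rfl
        intro i hi
        have hi' := Finset.mem_Icc.mp hi
        have : L + 1 - i = (L - i) + 1 := by omega
        rw [this, pow_succ]
        ring
      have hLk : L + 1 - k = (L - k) + 1 := by omega
      have := ih h
      rw [htop, hdouble, hLk, pow_succ]
      have h1 : L + 1 - (L + 1) = 0 := by omega
      rw [h1, pow_zero, one_mul]
      have h2 : (k + 2) * (2 ^ (L - k) * 2) = ((k + 2) * 2 ^ (L - k)) * 2 := by ring
      omega

/-- for `x` with `T^{-1}(x) ∉ A`, `κ(x) ≥ 5`, whose orbit avoids the all-zero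
point, and every `k ≥ 5`: `liminf_N (1/N) Σ_{i<N} 1_{E_k}(T^i x) ≤ (k+2)/2^k`. -/
theorem stmt8 (x : ℕ → Bool)
    (hpre : ∀ y, Tod y = x → y ∉ Aset)
    (h5 : ∀ i < 5, x i = false)
    (hnz : ∀ m, Tod^[m] x ≠ fun _ => false)
    (k : ℕ) (hk : 5 ≤ k) :
    Filter.atTop.liminf
      (fun N : ℕ => (1 / (N : ℝ)) *
        ∑ i ∈ Finset.range N, (Ek k).indicator (fun _ => (1 : ℝ)) (Tod^[i] x)) ≤
      ((k : ℝ) + 2) / 2 ^ k := by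
  set f : ℕ → ℝ := fun N : ℕ => (1 / (N : ℝ)) *
      ∑ i ∈ Finset.range N, (Ek k).indicator (fun _ => (1 : ℝ)) (Tod^[i] x) with hf
  have hind_nonneg : ∀ y, 0 ≤ (Ek k).indicator (fun _ => (1 : ℝ)) y :=
    fun y => Set.indicator_nonneg (fun _ _ => zero_le_one) y
  have hf_nonneg : ∀ N, 0 ≤ f N := by
    intro N
    apply mul_nonneg
    · positivity
    · exact Finset.sum_nonneg fun i _ => hind_nonneg _
  -- a true digit
  obtain ⟨p, hp⟩ : ∃ p, x p = true := by
    by_contra hc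
    push_neg at hc
    apply hnz 0
    have h0 : Tod^[0] x = x := rfl
    rw [h0]
    funext m
    cases h : x m
    · rfl
    · exact absurd h (hc m)
  have hfreq : ∃ᶠ N in atTop, f N ≤ ((k : ℝ) + 2) / 2 ^ k := by
    rw [Filter.frequently_atTop]
    intro M
    obtain ⟨L, hLge, hxL⟩ := exists_false_digit x hnz (max M (max (p + 1) k))
    have hML : M ≤ L := le_trans (le_max_left _ _) hLge
    have hpL : p + 1 ≤ L := le_trans (le_trans (le_max_left _ _) (le_max_right _ _)) hLge
    have hkL : k ≤ L := le_trans (le_trans (le_max_right _ _) (le_max_right _ _)) hLge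
    refine ⟨2 ^ L, le_trans hML (le_of_lt (Nat.lt_two_pow_self (n := L))), ?_⟩
    -- pointwise bound
    have hpoint : ∀ n ∈ Finset.range (2 ^ L),
        (Ek k).indicator (fun _ => (1 : ℝ)) (Tod^[n] x)
          ≤ ∑ i ∈ Finset.Icc (k + 1) L,
              (if (DN i x + n) % 2 ^ i < i then (1 : ℝ) else 0) := by
      intro n hn
      by_cases hmem : Tod^[n] x ∈ Ek k
      · rw [Set.indicator_of_mem hmem]
        obtain ⟨i, hik, hilt⟩ := (mem_Ek_iff k _).mp hmem
        rw [DN_iterate] at hilt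
        have hiL : i ≤ L := by
          by_contra hgt
          push_neg at hgt
          have hc1 : 1 ≤ DN i x := by
            have hpi : p ∈ Finset.range i := Finset.mem_range.mpr (by omega)
            have := Finset.single_le_sum
              (f := fun m => 2 ^ m * (x m).toNat) (fun m _ => Nat.zero_le _) hpi
            have h2 : 2 ^ p * (x p).toNat ≤ DN i x := this
            rw [hp] at h2
            have h2p : 0 < 2 ^ p := pow_pos (by norm_num) p
            simp only [Bool.toNat_true, mul_one] at h2
            omega
          have hkey := key x hpre i (by omega) hc1
          have hfalse := DN_add_false i L x (by omega) hxL
          have hnlt : n < 2 ^ L := Finset.mem_range.mp hn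
          rw [Nat.mod_eq_of_lt (by omega)] at hilt
          omega
        have hi_mem : i ∈ Finset.Icc (k + 1) L := Finset.mem_Icc.mpr ⟨hik, hiL⟩
        have hs := Finset.single_le_sum
          (f := fun i => if (DN i x + n) % 2 ^ i < i then (1 : ℝ) else 0)
          (fun j _ => by split <;> norm_num) hi_mem
        rw [if_pos hilt] at hs
        exact hs
      · rw [Set.indicator_of_notMem hmem]
        exact Finset.sum_nonneg fun j _ => by split <;> norm_num
    -- sum bound
    have hsum : ∑ n ∈ Finset.range (2 ^ L),
        (Ek k).indicator (fun _ => (1 : ℝ)) (Tod^[n] x)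
          ≤ ((k + 2) * 2 ^ (L - k) : ℕ) := by
      calc ∑ n ∈ Finset.range (2 ^ L), (Ek k).indicator (fun _ => (1 : ℝ)) (Tod^[n] x)
          ≤ ∑ n ∈ Finset.range (2 ^ L), ∑ i ∈ Finset.Icc (k + 1) L,
              (if (DN i x + n) % 2 ^ i < i then (1 : ℝ) else 0) :=
            Finset.sum_le_sum hpoint
        _ = ∑ i ∈ Finset.Icc (k + 1) L, ∑ n ∈ Finset.range (2 ^ L),
              (if (DN i x + n) % 2 ^ i < i then (1 : ℝ) else 0) := Finset.sum_comm
        _ = ∑ i ∈ Finset.Icc (k + 1) L,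
              (((Finset.range (2 ^ L)).filter (fun n => (DN i x + n) % 2 ^ i < i)).card : ℝ) := by
            apply Finset.sum_congr rfl
            intro i _
            rw [Finset.sum_boole]
        _ ≤ ∑ i ∈ Finset.Icc (k + 1) L, ((2 ^ (L - i) * i : ℕ) : ℝ) := by
            apply Finset.sum_le_sum
            intro i hi
            have hiL : i ≤ L := (Finset.mem_Icc.mp hi).2
            have h2 : 2 ^ i * 2 ^ (L - i) = 2 ^ L := by
              rw [← pow_add]
              congr 1
              omega
            have := count_le (DN i x) i (2 ^ (L - i))
            rw [h2] at this
            exact_mod_cast (by omega : ((Finset.range (2 ^ L)).filter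
              (fun n => (DN i x + n) % 2 ^ i < i)).card ≤ 2 ^ (L - i) * i)
        _ = ((∑ i ∈ Finset.Icc (k + 1) L, 2 ^ (L - i) * i : ℕ) : ℝ) := by
            rw [Nat.cast_sum]
        _ ≤ ((k + 2) * 2 ^ (L - k) : ℕ) := by
            have := sum_bound k L hkL
            exact_mod_cast (by omega : (∑ i ∈ Finset.Icc (k + 1) L, 2 ^ (L - i) * i)
              ≤ (k + 2) * 2 ^ (L - k))
    -- final arithmetic
    have h2L : ((2 ^ L : ℕ) : ℝ) = (2 : ℝ) ^ L := by push_cast; ring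
    have hsplit : (2 : ℝ) ^ L = 2 ^ (L - k) * 2 ^ k := by
      rw [← pow_add]
      congr 1
      omega
    have h2Lpos : (0 : ℝ) < (2 : ℝ) ^ L := by positivity
    show (1 / ((2 ^ L : ℕ) : ℝ)) * _ ≤ _
    rw [h2L]
    rw [div_mul_eq_mul_div, one_mul, div_le_div_iff₀ h2Lpos (by positivity)]
    calc (∑ n ∈ Finset.range (2 ^ L), (Ek k).indicator (fun _ => (1 : ℝ)) (Tod^[n] x)) * 2 ^ k
        ≤ (((k + 2) * 2 ^ (L - k) : ℕ) : ℝ) * 2 ^ k := by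
          apply mul_le_mul_of_nonneg_right hsum (by positivity)
      _ = ((k : ℝ) + 2) * 2 ^ L := by
          push_cast
          rw [hsplit]
          ring
  exact Filter.liminf_le_of_frequently_le hfreq (Filter.isBoundedUnder_of ⟨0, hf_nonneg⟩)
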